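/- Let a > 0, m > 0, N > 0, x₀ > 0 and let 0 ≤ β < α be real numbers. Let A = {(x,y) : 0 < x < x₀, 0 < y < N·x^m} and h(x,y) = a·x^α·y^β. Then there exist constants c, C > 0 (depending on a, m, α, β) such that for all sufficiently small ε > 0: c·N^((α-β)/(α+mβ))·ε^((m+1)/(α+mβ)) < |{(x,y) ∈ A : |h(x,y)| < ε}| < C·N^((α-β)/(α+mβ))·ε^((m+1)/(α+mβ)). -/

import Mathlib

open MeasureTheory Set

/-- Lemma 2.3 c): for `0 ≤ β < α`, the area of the sublevel set of `h(x,y) = a x^α y^β`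
on the curved triangle `{0 < x < x₀, 0 < y < N x^m}` is comparable to
`N^((α-β)/(α+mβ)) * ε^((m+1)/(α+mβ))` for small `ε`. -/
theorem monomial_sublevel_beta_lt_alpha
    (a m N x₀ α β : ℝ) (ha : 0 < a) (hm : 0 < m) (hN : 0 < N) (hx₀ : 0 < x₀)
    (hβ : 0 ≤ β) (hαβ : β < α) :
    ∃ c C : ℝ, 0 < c ∧ 0 < C ∧ ∃ ε₀ > 0, ∀ ε : ℝ, 0 < ε → ε < ε₀ →
      c * N ^ ((α - β) / (α + m * β)) * ε ^ ((m + 1) / (α + m * β)) <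
        (volume {p : ℝ × ℝ | (0 < p.1 ∧ p.1 < x₀ ∧ 0 < p.2 ∧ p.2 < N * p.1 ^ m) ∧
          |a * p.1 ^ α * p.2 ^ β| < ε}).toReal ∧
      (volume {p : ℝ × ℝ | (0 < p.1 ∧ p.1 < x₀ ∧ 0 < p.2 ∧ p.2 < N * p.1 ^ m) ∧
          |a * p.1 ^ α * p.2 ^ β| < ε}).toReal <
        C * N ^ ((α - β) / (α + m * β)) * ε ^ ((m + 1) / (α + m * β)) := by
  have hα : 0 < α := hβ.trans_lt hαβ
  have hαβ' : 0 < α - β := sub_pos.mpr hαβ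
  have hσ : 0 < α + m * β := by positivity
  set σ := α + m * β with hσdef
  have hσ0 : σ ≠ 0 := hσ.ne'
  set s := (m + 1) / σ with hsdef
  have hs : 0 < s := by positivity
  refine ⟨(2:ℝ) ^ (-(m+2)) * a ^ (-s), (α/(α-β)+1) * a ^ (-s), by positivity, ?_, a * N ^ β * x₀ ^ σ, by positivity, ?_⟩
  · have h1 : 0 < α/(α-β) := div_pos hα hαβ'
    positivity
  intro ε hε hεlt
  set S := {p : ℝ × ℝ | (0 < p.1 ∧ p.1 < x₀ ∧ 0 < p.2 ∧ p.2 < N * p.1 ^ m) ∧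
      |a * p.1 ^ α * p.2 ^ β| < ε} with hSdef
  have hb : 0 < ε / (a * N ^ β) := by positivity
  set t := (ε / (a * N ^ β)) ^ (1/σ) with htdef
  have ht0 : 0 < t := Real.rpow_pos_of_pos hb _
  have htσ : t ^ σ = ε / (a * N ^ β) := by
    rw [htdef, ← Real.rpow_mul hb.le, one_div, inv_mul_cancel₀ hσ0, Real.rpow_one]
  have hε_eq : ε = a * N ^ β * t ^ σ := by
    rw [htσ]; field_simp
  have htx₀ : t < x₀ := by
    have h1 : ε / (a * N ^ β) < x₀ ^ σ := by
      rw [div_lt_iff₀ (by positivity)]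
      calc ε < a * N ^ β * x₀ ^ σ := hεlt
        _ = x₀ ^ σ * (a * N ^ β) := by ring
    calc t = (ε / (a*N^β)) ^ (1/σ) := rfl
      _ < (x₀ ^ σ) ^ (1/σ) := Real.rpow_lt_rpow hb.le h1 (by positivity)
      _ = x₀ := by rw [← Real.rpow_mul hx₀.le, mul_one_div, div_self hσ0, Real.rpow_one]
  -- key algebraic identity
  have hN_bs : (0:ℝ) < N ^ (β * s) := Real.rpow_pos_of_pos hN _
  have ha_s : (0:ℝ) < a ^ s := Real.rpow_pos_of_pos ha _
  have hts : t ^ (m+1) = ε ^ s / (a ^ s * N ^ (β * s)) := by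
    rw [htdef, ← Real.rpow_mul hb.le, show 1/σ * (m+1) = s by rw [hsdef]; ring,
      Real.div_rpow hε.le (by positivity), Real.mul_rpow ha.le (by positivity),
      ← Real.rpow_mul hN.le]
  have hkey : N ^ ((α-β)/σ) * N ^ (β*s) = N := by
    rw [← Real.rpow_add hN, show (α-β)/σ + β*s = 1 by rw [hsdef, hσdef]; field_simp; ring,
      Real.rpow_one]
  have hE : N ^ ((α - β)/σ) * ε ^ s = a ^ s * (N * t ^ (m+1)) := by
    have h2 : N ^ ((α-β)/σ) = N / N ^ (β*s) := (eq_div_iff hN_bs.ne').mpr hkey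
    rw [hts, h2]; field_simp
  have key : a^(-s) * (N^((α-β)/σ) * ε^s) = N * t^(m+1) := by
    rw [hE, Real.rpow_neg ha.le]; field_simp
  -- value of h on the corner
  have hεval : a * t ^ α * (N * t ^ m) ^ β = ε := by
    rw [Real.mul_rpow hN.le (Real.rpow_nonneg ht0.le m), ← Real.rpow_mul ht0.le, hε_eq, hσdef,
      Real.rpow_add ht0]
    ring
  -- lower bound rectangle
  have hRsub : Ioo (t/2) t ×ˢ Ioo 0 (N * (t/2) ^ m) ⊆ S := by
    rintro ⟨x, y⟩ ⟨⟨hx1, hx2⟩, hy1, hy2⟩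
    have hx0 : 0 < x := (half_pos ht0).trans hx1
    have hymax : y < N * t ^ m := hy2.trans_le
      (mul_le_mul_of_nonneg_left (Real.rpow_le_rpow (by positivity) (by linarith) hm.le) hN.le)
    refine ⟨⟨hx0, hx2.trans htx₀, hy1, ?_⟩, ?_⟩
    · exact hy2.trans_le
        (mul_le_mul_of_nonneg_left (Real.rpow_le_rpow (by positivity) hx1.le hm.le) hN.le)
    · rw [abs_of_pos (by positivity), ← hεval]
      have h1 : x ^ α < t ^ α := Real.rpow_lt_rpow hx0.le hx2 hα
      have h2 : y ^ β ≤ (N * t ^ m) ^ β := Real.rpow_le_rpow hy1.le hymax.le hβ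
      calc a * x ^ α * y ^ β ≤ a * x ^ α * (N*t^m)^β :=
            mul_le_mul_of_nonneg_left h2 (by positivity)
        _ < a * t ^ α * (N*t^m)^β := by
            have : 0 < (N*t^m)^β := Real.rpow_pos_of_pos (by positivity) β
            exact mul_lt_mul_of_pos_right (mul_lt_mul_of_pos_left h1 ha) this
  have hvolR : (volume (Ioo (t/2) t ×ˢ Ioo 0 (N * (t/2) ^ m))) =
      ENNReal.ofReal (t/2 * (N * (t/2) ^ m)) := by
    rw [Measure.volume_eq_prod, Measure.prod_prod, Real.volume_Ioo, Real.volume_Ioo,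
      ← ENNReal.ofReal_mul (by linarith)]
    congr 1; ring
  -- upper bound
  have hup : volume S ≤ ENNReal.ofReal (α/(α-β) * (N * t ^ (m+1))) := by
    have hvolP1 : volume (Ioo 0 t ×ˢ Ioo 0 (N*t^m)) = ENNReal.ofReal (N * t^(m+1)) := by
      rw [Measure.volume_eq_prod, Measure.prod_prod, Real.volume_Ioo, Real.volume_Ioo,
        ← ENNReal.ofReal_mul (by linarith)]
      congr 1
      rw [Real.rpow_add_one ht0.ne']; ring
    rcases eq_or_lt_of_le hβ with hβ0 | hβpos
    · -- case β = 0
      have hσα : σ = α := by rw [hσdef, ← hβ0]; ring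
      have hsubP1 : S ⊆ Ioo 0 t ×ˢ Ioo 0 (N * t ^ m) := by
        rintro ⟨x, y⟩ ⟨⟨hx0, hxx₀, hy0, hyx⟩, habs'⟩
        have hyβ : y ^ β = 1 := by rw [← hβ0, Real.rpow_zero]
        have h1 : a * x ^ α < a * t ^ α := by
          have := habs'
          rw [abs_of_pos (by positivity), hyβ, mul_one] at this
          calc a * x ^ α < ε := this
            _ = a * N ^ β * t ^ σ := hε_eq
            _ = a * t ^ α := by rw [← hβ0, Real.rpow_zero, hσα]; ring
        have hxt : x < t := by
          have := lt_of_mul_lt_mul_left h1 ha.le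
          exact (Real.rpow_lt_rpow_iff hx0.le ht0.le hα).mp this
        refine ⟨⟨hx0, hxt⟩, hy0, hyx.trans_le ?_⟩
        exact mul_le_mul_of_nonneg_left (Real.rpow_le_rpow hx0.le hxt.le hm.le) hN.le
      calc volume S ≤ volume (Ioo 0 t ×ˢ Ioo 0 (N*t^m)) := measure_mono hsubP1
        _ = ENNReal.ofReal (N * t^(m+1)) := hvolP1
        _ ≤ ENNReal.ofReal (α/(α-β) * (N * t^(m+1))) := by
            apply ENNReal.ofReal_le_ofReal
            have h2 : α/(α-β) = 1 := by rw [← hβ0, sub_zero, div_self hα.ne']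
            rw [h2, one_mul]
    · -- case 0 < β
      set w : ℝ → ℝ := fun x => (ε/a) ^ (1/β) * x ^ (-(α/β)) with hwdef
      have hαβ1 : -(α/β) < -1 := by
        rw [neg_lt_neg_iff]; exact (one_lt_div hβpos).mpr hαβ
      have hsub : S ⊆ (Ioo 0 t ×ˢ Ioo 0 (N * t ^ m) ∪ ({t} : Set ℝ) ×ˢ (univ : Set ℝ)) ∪
          regionBetween (fun _ => (0:ℝ)) w (Ioi t) := by
        rintro ⟨x, y⟩ ⟨⟨hx0, hxx₀, hy0, hyx⟩, habs'⟩
        rcases lt_trichotomy x t with hxt | hxt | hxt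
        · left; left
          refine ⟨⟨hx0, hxt⟩, hy0, hyx.trans_le ?_⟩
          exact mul_le_mul_of_nonneg_left (Real.rpow_le_rpow hx0.le hxt.le hm.le) hN.le
        · left; right; exact ⟨hxt, mem_univ _⟩
        · right
          have h1 : a * x ^ α * y ^ β < ε := by
            rwa [abs_of_pos (by positivity)] at habs'
          have hxα : 0 < x ^ α := Real.rpow_pos_of_pos hx0 α
          have h2 : y ^ β < ε / a / x ^ α := by
            rw [div_div, lt_div_iff₀ (by positivity)]
            calc y ^ β * (a * x ^ α) = a * x ^ α * y ^ β := by ring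
              _ < ε := h1
          have h3 : y = (y ^ β) ^ (1/β) := by
            rw [← Real.rpow_mul hy0.le, mul_one_div, div_self hβpos.ne', Real.rpow_one]
          have h4 : y < w x := by
            calc y = (y^β)^(1/β) := h3
              _ < (ε/a/x^α)^(1/β) :=
                  Real.rpow_lt_rpow (Real.rpow_nonneg hy0.le β) h2 (by positivity)
              _ = w x := by
                  rw [hwdef]
                  simp only
                  rw [Real.div_rpow (by positivity) hxα.le, ← Real.rpow_mul hx0.le,
                    mul_one_div, Real.rpow_neg hx0.le, div_eq_mul_inv]
          exact ⟨hxt, hy0, h4⟩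
      have hw_int : IntegrableOn w (Ioi t) :=
        (integrableOn_Ioi_rpow_of_lt hαβ1 ht0).const_mul _
      have hreg : volume (regionBetween (fun _ => (0:ℝ)) w (Ioi t)) =
          ENNReal.ofReal (∫ x in Ioi t, w x) := by
        rw [Measure.volume_eq_prod,
          volume_regionBetween_eq_integral (integrableOn_zero) hw_int measurableSet_Ioi
          (fun x hx => by
            have hx0 : (0:ℝ) < x := ht0.trans hx
            exact mul_nonneg (Real.rpow_nonneg (by positivity) _) (Real.rpow_nonneg hx0.le _))]
        congr 1
        simp [Pi.sub_apply]
      have hInt : ∫ x in Ioi t, w x = β/(α-β) * (N * t ^ (m+1)) := by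
        rw [hwdef]
        simp only
        rw [MeasureTheory.integral_const_mul, integral_Ioi_rpow_of_lt hαβ1 ht0]
        have hεa : ε/a = N^β * t^σ := by rw [hε_eq]; field_simp
        rw [hεa, Real.mul_rpow (by positivity) (by positivity), ← Real.rpow_mul hN.le,
          ← Real.rpow_mul ht0.le, show β * (1/β) = 1 by field_simp, Real.rpow_one]
        have hd : -(α/β) + 1 ≠ 0 := by
          have : -(α/β) + 1 < 0 := by linarith
          exact this.ne
        have hpow : t ^ (σ*(1/β)) * t ^ (-(α/β)+1) = t ^ (m+1) := by
          rw [← Real.rpow_add ht0]; congr 1; rw [hσdef]; field_simp; ring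
        have hcoef : -(1:ℝ)/(-(α/β)+1) = β/(α-β) := by
          rw [div_eq_div_iff hd hαβ'.ne']
          field_simp
          ring
        calc N * t ^ (σ*(1/β)) * (-t ^ (-(α/β)+1) / (-(α/β)+1))
            = (-1/(-(α/β)+1)) * (N * (t^(σ*(1/β)) * t^(-(α/β)+1))) := by ring
          _ = β/(α-β) * (N * t^(m+1)) := by rw [hcoef, hpow]
      have hvolL : volume (({t} : Set ℝ) ×ˢ (univ : Set ℝ)) = 0 := by
        rw [Measure.volume_eq_prod, Measure.prod_prod, Real.volume_singleton, zero_mul]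
      calc volume S ≤ volume ((Ioo 0 t ×ˢ Ioo 0 (N * t ^ m) ∪ ({t} : Set ℝ) ×ˢ (univ : Set ℝ)) ∪
            regionBetween (fun _ => (0:ℝ)) w (Ioi t)) := measure_mono hsub
        _ ≤ volume (Ioo 0 t ×ˢ Ioo 0 (N * t ^ m)) + volume (({t} : Set ℝ) ×ˢ (univ : Set ℝ)) +
            volume (regionBetween (fun _ => (0:ℝ)) w (Ioi t)) :=
            le_trans (measure_union_le _ _) (add_le_add (measure_union_le _ _) le_rfl)
        _ = ENNReal.ofReal (N*t^(m+1)) + 0 + ENNReal.ofReal (β/(α-β) * (N*t^(m+1))) := by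
            rw [hvolP1, hvolL, hreg, hInt]
        _ = ENNReal.ofReal (N*t^(m+1) + β/(α-β)*(N*t^(m+1))) := by
            rw [add_zero, ← ENNReal.ofReal_add (by positivity)
              (mul_nonneg (div_nonneg hβ hαβ'.le) (by positivity))]
        _ = ENNReal.ofReal (α/(α-β) * (N*t^(m+1))) := by
            congr 1; field_simp; ring
  have hfin : volume S ≠ ⊤ := (hup.trans_lt ENNReal.ofReal_lt_top).ne
  constructor
  · -- lower bound
    have h1 : ENNReal.ofReal (t/2 * (N*(t/2)^m)) ≤ volume S := by
      rw [← hvolR]; exact measure_mono hRsub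
    have h2 : t/2 * (N*(t/2)^m) ≤ (volume S).toReal := by
      rw [← ENNReal.toReal_ofReal (show (0:ℝ) ≤ t/2*(N*(t/2)^m) by positivity)]
      exact ENNReal.toReal_mono hfin h1
    refine lt_of_lt_of_le ?_ h2
    calc (2:ℝ)^(-(m+2)) * a^(-s) * N^((α-β)/σ) * ε^s
        = 2^(-(m+2)) * (a^(-s) * (N^((α-β)/σ) * ε^s)) := by ring
      _ = 2^(-(m+2)) * (N * t^(m+1)) := by rw [key]
      _ < t/2 * (N*(t/2)^m) := by
          rw [Real.div_rpow ht0.le (by norm_num), Real.rpow_add_one ht0.ne']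
          have h2m : (0:ℝ) < 2 ^ m := Real.rpow_pos_of_pos two_pos m
          have hlt : (2:ℝ)^(-(m+2)) < (2:ℝ)^(-(m+1)) :=
            (Real.rpow_lt_rpow_left_iff one_lt_two).mpr (by linarith)
          have e1 : (2:ℝ)^(-(m+1)) = 1/(2*2^m) := by
            rw [Real.rpow_neg (by norm_num), Real.rpow_add two_pos, Real.rpow_one]; ring
          have e2 : t/2 * (N * (t^m/2^m)) = (2:ℝ)^(-(m+1)) * (N * (t^m*t)) := by
            rw [e1]; field_simp
          rw [e2]
          exact mul_lt_mul_of_pos_right hlt (by positivity)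
  · -- upper bound
    have h2 : (volume S).toReal ≤ α/(α-β) * (N * t^(m+1)) := by
      rw [← ENNReal.toReal_ofReal (show (0:ℝ) ≤ α/(α-β) * (N*t^(m+1)) by
        exact mul_nonneg (div_nonneg hα.le hαβ'.le) (by positivity))]
      exact ENNReal.toReal_mono ENNReal.ofReal_ne_top hup
    refine lt_of_le_of_lt h2 ?_
    calc α/(α-β) * (N*t^(m+1)) < (α/(α-β)+1) * (N*t^(m+1)) := by
          have h3 : 0 < N*t^(m+1) := by positivity
          nlinarith
      _ = (α/(α-β)+1) * a^(-s) * N^((α-β)/σ) * ε^s := by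
          rw [show (α/(α-β)+1) * a^(-s) * N^((α-β)/σ) * ε^s
            = (α/(α-β)+1) * (a^(-s) * (N^((α-β)/σ) * ε^s)) by ring, key]
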